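/- If I is a strongly d-Golod monomial ideal in K[x_1,...,x_n], then its integral closure Ī is strongly d-Golod. -/

import Mathlib

/-- An ideal of `K[x_1,…,x_n]` is a monomial ideal if with each polynomial it contains
all the monomials in its support. -/
def IsMonomialIdeal {K : Type*} [Field K] {n : ℕ}
    (I : Ideal (MvPolynomial (Fin n) K)) : Prop :=
  ∀ f ∈ I, ∀ m ∈ f.support, MvPolynomial.monomial m (1 : K) ∈ I

/-- A monomial ideal `L` of `K[x_1,…,x_n]` is strongly d-Golod if for all monomials
`u, v ∈ L` and all variables `x_i ∣ u`, `x_j ∣ v`, one has `uv/(x_i x_j) ∈ L`. -/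
def StronglyDGolod {K : Type*} [Field K] {n : ℕ}
    (L : Ideal (MvPolynomial (Fin n) K)) : Prop :=
  ∀ a b : Fin n →₀ ℕ, MvPolynomial.monomial a (1 : K) ∈ L →
    MvPolynomial.monomial b (1 : K) ∈ L →
    ∀ i j : Fin n, a i ≠ 0 → b j ≠ 0 →
      MvPolynomial.monomial (a + b - Finsupp.single i 1 - Finsupp.single j 1) (1 : K) ∈ L

/-- The integral closure of a monomial ideal `I`: the (monomial) ideal generated by
all monomials `u` such that `u^m ∈ I^m` for some `m ≥ 1`. -/
noncomputable def monomialIntegralClosure {K : Type*} [Field K] {n : ℕ}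
    (I : Ideal (MvPolynomial (Fin n) K)) : Ideal (MvPolynomial (Fin n) K) :=
  Ideal.span {p | ∃ a : Fin n →₀ ℕ, p = MvPolynomial.monomial a (1 : K) ∧
    ∃ m : ℕ, 1 ≤ m ∧ (MvPolynomial.monomial a (1 : K)) ^ m ∈ I ^ m}
section AuxSDG

open MvPolynomial Finsupp

variable {K : Type*} [Field K] {n : ℕ} {I J L : Ideal (MvPolynomial (Fin n) K)}

private lemma monIC_eq (I : Ideal (MvPolynomial (Fin n) K)) :
    monomialIntegralClosure I =
      Ideal.span ((fun s => monomial s (1 : K)) ''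
        {a | ∃ m : ℕ, 1 ≤ m ∧ (monomial a (1 : K)) ^ m ∈ I ^ m}) := by
  unfold monomialIntegralClosure
  congr 1
  ext p
  constructor
  · rintro ⟨a, rfl, h⟩; exact ⟨a, h, rfl⟩
  · rintro ⟨a, h, rfl⟩; exact ⟨a, rfl, h⟩

private lemma self_mem_support {a : Fin n →₀ ℕ} :
    a ∈ (monomial a (1 : K)).support := by
  classical
  rw [support_monomial]
  simp

private lemma mem_monIC_elim {a : Fin n →₀ ℕ}
    (h : monomial a (1 : K) ∈ monomialIntegralClosure I) :
    ∃ c ≤ a, ∃ m : ℕ, 1 ≤ m ∧ (monomial c (1 : K)) ^ m ∈ I ^ m := by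
  rw [monIC_eq, mem_ideal_span_monomial_image] at h
  obtain ⟨c, hc, hca⟩ := h a self_mem_support
  exact ⟨c, hca, hc⟩

private lemma mem_monIC_of_le {c a : Fin n →₀ ℕ} (hca : c ≤ a)
    (h : ∃ m : ℕ, 1 ≤ m ∧ (monomial c (1 : K)) ^ m ∈ I ^ m) :
    monomial a (1 : K) ∈ monomialIntegralClosure I := by
  have hg : monomial c (1 : K) ∈ monomialIntegralClosure I :=
    Ideal.subset_span ⟨c, rfl, h⟩
  have he : monomial a (1 : K) = monomial (a - c) (1 : K) * monomial c (1 : K) := by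
    rw [monomial_mul, one_mul, tsub_add_cancel_of_le hca]
  rw [he]
  exact Ideal.mul_mem_left _ _ hg

private lemma mul_support_decomp (hJ : IsMonomialIdeal J) (hL : IsMonomialIdeal L) :
    ∀ f ∈ J * L, ∀ m ∈ f.support, ∃ a b, m = a + b ∧
      monomial a (1 : K) ∈ J ∧ monomial b (1 : K) ∈ L := by
  intro f hf
  refine Submodule.mul_induction_on hf ?_ ?_
  · intro g hg h hh m hm
    classical
    obtain ⟨a, ha, b, hb, hab⟩ := Finset.mem_add.mp (support_mul g h hm)
    exact ⟨a, b, hab.symm, hJ g hg a ha, hL h hh b hb⟩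
  · intro f₁ f₂ h₁ h₂ m hm
    classical
    rcases Finset.mem_union.mp (MvPolynomial.support_add hm) with h | h
    · exact h₁ m h
    · exact h₂ m h

private lemma isMonomialIdeal_mul (hJ : IsMonomialIdeal J) (hL : IsMonomialIdeal L) :
    IsMonomialIdeal (J * L) := by
  intro f hf m hm
  obtain ⟨a, b, rfl, haJ, hbL⟩ := mul_support_decomp hJ hL f hf m hm
  have he : monomial (a + b) (1 : K) = monomial a 1 * monomial b 1 := by
    rw [monomial_mul, one_mul]
  rw [he]
  exact Ideal.mul_mem_mul haJ hbL

private lemma isMonomialIdeal_pow (hI : IsMonomialIdeal I) (s : ℕ) :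
    IsMonomialIdeal (I ^ s) := by
  induction s with
  | zero => intro f _ m _; rw [pow_zero, Ideal.one_eq_top]; trivial
  | succ s ih => rw [pow_succ]; exact isMonomialIdeal_mul ih hI

private lemma exists_multiset (hI : IsMonomialIdeal I) :
    ∀ (s : ℕ) (U : Fin n →₀ ℕ), monomial U (1 : K) ∈ I ^ s →
      ∃ M : Multiset (Fin n →₀ ℕ), Multiset.card M = s ∧
        (∀ c ∈ M, monomial c (1 : K) ∈ I) ∧ M.sum ≤ U := by
  intro s
  induction s with
  | zero => intro U _; exact ⟨0, rfl, by simp, by simp⟩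
  | succ s ih =>
    intro U hU
    rw [pow_succ] at hU
    obtain ⟨a, b, hab, haI, hbI⟩ :=
      mul_support_decomp (isMonomialIdeal_pow hI s) hI _ hU U self_mem_support
    obtain ⟨M, hcard, hmem, hsum⟩ := ih a haI
    refine ⟨b ::ₘ M, by simp [hcard], ?_, ?_⟩
    · intro c hc
      rcases Multiset.mem_cons.mp hc with rfl | h
      · exact hbI
      · exact hmem c h
    · simp only [Multiset.sum_cons]
      calc b + M.sum ≤ b + a := add_le_add (le_refl b) hsum
        _ = U := by rw [hab, add_comm]

private lemma exists_multiset_eq (hI : IsMonomialIdeal I) {s : ℕ} (hs : 1 ≤ s)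
    {U : Fin n →₀ ℕ} (hU : monomial U (1 : K) ∈ I ^ s) :
    ∃ M : Multiset (Fin n →₀ ℕ), Multiset.card M = s ∧
      (∀ c ∈ M, monomial c (1 : K) ∈ I) ∧ M.sum = U := by
  obtain ⟨M, hcard, hmem, hsum⟩ := exists_multiset hI s U hU
  have hM0 : M ≠ 0 := by
    intro h; rw [h] at hcard; simp at hcard; omega
  obtain ⟨c, hc⟩ := Multiset.exists_mem_of_ne_zero hM0
  obtain ⟨M', rfl⟩ := Multiset.exists_cons_of_mem hc
  refine ⟨(c + (U - (c ::ₘ M').sum)) ::ₘ M', by simpa using hcard, ?_, ?_⟩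
  · intro d hd
    rcases Multiset.mem_cons.mp hd with rfl | h
    · have : monomial (c + (U - (c ::ₘ M').sum)) (1 : K)
          = monomial (U - (c ::ₘ M').sum) 1 * monomial c 1 := by
        rw [monomial_mul, one_mul, add_comm]
      rw [this]
      exact Ideal.mul_mem_left _ _ (hmem c (Multiset.mem_cons_self c M'))
    · exact hmem d (Multiset.mem_cons_of_mem h)
  · simp only [Multiset.sum_cons]
    have h1 : c + (U - (c + M'.sum)) + M'.sum = (c + M'.sum) + (U - (c + M'.sum)) := by
      rw [add_right_comm]
    rw [h1, add_tsub_cancel_of_le (by simpa [Multiset.sum_cons] using hsum)]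

private lemma prod_map_monomial (M : Multiset (Fin n →₀ ℕ)) :
    (M.map (fun c => monomial c (1 : K))).prod = monomial M.sum (1 : K) := by
  induction M using Multiset.induction with
  | empty => simp
  | cons c M ih => simp [ih, monomial_mul]

private lemma multiset_mem_pow {M : Multiset (Fin n →₀ ℕ)}
    (h : ∀ c ∈ M, monomial c (1 : K) ∈ I) :
    monomial M.sum (1 : K) ∈ I ^ (Multiset.card M) := by
  rw [← prod_map_monomial]
  induction M using Multiset.induction with
  | empty => simp
  | cons c M ih =>
    simp only [Multiset.map_cons, Multiset.prod_cons, Multiset.card_cons, pow_succ']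
    exact Ideal.mul_mem_mul (h c (Multiset.mem_cons_self c M))
      (ih fun c' hc' => h c' (Multiset.mem_cons_of_mem hc'))

private lemma sum_apply_ms (M : Multiset (Fin n →₀ ℕ)) (i : Fin n) :
    M.sum i = (M.map (fun c => c i)).sum := by
  induction M using Multiset.induction with
  | empty => simp
  | cons c M ih => simp [Finsupp.add_apply, ih]

end AuxSDG

section Golod

open MvPolynomial Finsupp

variable {K : Type*} [Field K] {n : ℕ} {I : Ideal (MvPolynomial (Fin n) K)}

private lemma golod_pow (hI : IsMonomialIdeal I) (hIG : StronglyDGolod I) (i j : Fin n) :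
    ∀ (r s : ℕ) (U : Fin n →₀ ℕ), monomial U (1 : K) ∈ I ^ s →
      r • (Finsupp.single i 1 + Finsupp.single j 1) ≤ U →
      monomial (U - r • (Finsupp.single i 1 + Finsupp.single j 1)) (1 : K) ∈ I ^ (s - r) := by
  set E := Finsupp.single i (1 : ℕ) + Finsupp.single j 1 with hE
  intro r
  induction r with
  | zero => intro s U hU _; simpa using hU
  | succ r ih =>
    intro s U hU hle
    by_cases hrs : s ≤ r + 1
    · rw [Nat.sub_eq_zero_of_le hrs, pow_zero, Ideal.one_eq_top]; trivial
    push_neg at hrs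
    have hs1 : 1 ≤ s := by omega
    obtain ⟨M, hcard, hmem, hsum⟩ := exists_multiset_eq hI hs1 hU
    have hEU : E ≤ U := le_trans (by rw [succ_nsmul]; exact le_add_self) hle
    have hEi : 1 ≤ E i := by
      rw [hE, Finsupp.add_apply, Finsupp.single_eq_same]; exact Nat.le_add_right 1 _
    have hEj : 1 ≤ E j := by
      rw [hE, Finsupp.add_apply, Finsupp.single_eq_same]; exact Nat.le_add_left 1 _
    have hUi : 1 ≤ U i := le_trans hEi (hEU i)
    have hUj : 1 ≤ U j := le_trans hEj (hEU j)
    have hex : ∃ c ∈ M, c i ≠ 0 := by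
      by_contra h
      push_neg at h
      have h0 : M.sum i = 0 := by
        rw [sum_apply_ms]
        refine Multiset.sum_eq_zero ?_
        intro x hx
        obtain ⟨c, hc, rfl⟩ := Multiset.mem_map.mp hx
        exact h c hc
      rw [hsum] at h0; omega
    by_cases hpair : ∃ c ∈ M, ∃ c' ∈ M.erase c, c i ≠ 0 ∧ c' j ≠ 0
    · obtain ⟨c, hc, c', hc', hci, hcj⟩ := hpair
      have hsi : Finsupp.single i 1 ≤ c := Finsupp.single_le_iff.mpr (by omega)
      have hsj : Finsupp.single j 1 ≤ c' := Finsupp.single_le_iff.mpr (by omega)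
      have hmI : monomial (c + c' - Finsupp.single i 1 - Finsupp.single j 1) (1 : K) ∈ I :=
        hIG c c' (hmem c hc) (hmem c' (Multiset.mem_of_mem_erase hc')) i j hci hcj
      set d := c + c' - Finsupp.single i 1 - Finsupp.single j 1 with hd
      set M2 := (M.erase c).erase c' with hM2
      have hMdec : c ::ₘ c' ::ₘ M2 = M := by
        rw [hM2, Multiset.cons_erase hc', Multiset.cons_erase hc]
      have hUsum : c + (c' + M2.sum) = U := by
        have h2 := congrArg Multiset.sum hMdec
        rwa [Multiset.sum_cons, Multiset.sum_cons, hsum] at h2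
      have hECC : E ≤ c + c' := by rw [hE]; exact add_le_add hsi hsj
      have hdsum : d + M2.sum = U - E := by
        rw [hd, tsub_tsub, ← hE, tsub_add_eq_add_tsub hECC, add_assoc, hUsum]
      have hcard2 : Multiset.card (d ::ₘ M2) = s - 1 := by
        have h3 := congrArg Multiset.card hMdec
        rw [Multiset.card_cons, Multiset.card_cons, hcard] at h3
        rw [Multiset.card_cons]; omega
      have hmem2 : ∀ x ∈ d ::ₘ M2, monomial x (1 : K) ∈ I := by
        intro x hx
        rcases Multiset.mem_cons.mp hx with rfl | hx2
        · exact hmI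
        · refine hmem x ?_
          rw [← hMdec]
          exact Multiset.mem_cons_of_mem (Multiset.mem_cons_of_mem hx2)
      have hUE : monomial (U - E) (1 : K) ∈ I ^ (s - 1) := by
        have h4 := multiset_mem_pow hmem2
        rwa [Multiset.sum_cons, hdsum, hcard2] at h4
      have hle2 : r • E ≤ U - E :=
        (le_tsub_iff_right hEU).mpr (by rw [← succ_nsmul]; exact hle)
      have h5 := ih (s - 1) (U - E) hUE hle2
      have hexp : U - E - r • E = U - (r + 1) • E := by
        rw [tsub_tsub, ← succ_nsmul']
      have hss : s - 1 - r = s - (r + 1) := by omega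
      rwa [hexp, hss] at h5
    · obtain ⟨c, hc, hci⟩ := hex
      have hrest_j : ∀ c' ∈ M.erase c, c' j = 0 := by
        intro c' hc'
        by_contra h
        exact hpair ⟨c, hc, c', hc', hci, h⟩
      have hSj : (M.erase c).sum j = 0 := by
        rw [sum_apply_ms]
        refine Multiset.sum_eq_zero ?_
        intro x hx
        obtain ⟨c', hc', rfl⟩ := Multiset.mem_map.mp hx
        exact hrest_j c' hc'
      have hUc : c + (M.erase c).sum = U := by
        have h2 := congrArg Multiset.sum (Multiset.cons_erase hc)
        rwa [Multiset.sum_cons, hsum] at h2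
      have hcj : c j ≠ 0 := by
        have h3 := DFunLike.congr_fun hUc j
        rw [Finsupp.add_apply, hSj] at h3
        omega
      have hrest_i : ∀ c'' ∈ M.erase c, c'' i = 0 := by
        intro c'' hc''
        by_contra h
        apply hpair
        refine ⟨c'', Multiset.mem_of_mem_erase hc'', c, ?_, h, hcj⟩
        by_cases he : c = c''
        · subst he; exact hc''
        · exact (Multiset.mem_erase_of_ne he).mpr hc
      have hSi : (M.erase c).sum i = 0 := by
        rw [sum_apply_ms]
        refine Multiset.sum_eq_zero ?_
        intro x hx
        obtain ⟨c'', hc'', rfl⟩ := Multiset.mem_map.mp hx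
        exact hrest_i c'' hc''
      have hkey : (M.erase c).sum ≤ U - (r + 1) • E := by
        intro m
        rw [Finsupp.tsub_apply]
        by_cases hi : m = i
        · subst hi; rw [hSi]; exact Nat.zero_le _
        · by_cases hj : m = j
          · subst hj; rw [hSj]; exact Nat.zero_le _
          · have hEm : E m = 0 := by
              rw [hE, Finsupp.add_apply, Finsupp.single_apply, Finsupp.single_apply,
                if_neg (fun h => hi h.symm), if_neg (fun h => hj h.symm)]
              rfl
            have hsm : ((r + 1) • E) m = 0 := by
              rw [Finsupp.smul_apply, hEm, smul_eq_mul, Nat.mul_zero]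
            have h4 := DFunLike.congr_fun hUc m
            rw [Finsupp.add_apply] at h4
            omega
      have hSmem : monomial (M.erase c).sum (1 : K) ∈ I ^ (s - 1) := by
        have h5 := multiset_mem_pow (M := M.erase c) (fun x hx => hmem x (Multiset.mem_of_mem_erase hx))
        have h6 : Multiset.card (M.erase c) = s - 1 := by
          rw [Multiset.card_erase_of_mem hc, hcard]; rfl
        rwa [h6] at h5
      have hfinal : monomial (U - (r + 1) • E) (1 : K) =
          monomial (U - (r + 1) • E - (M.erase c).sum) 1 * monomial (M.erase c).sum 1 := by
        rw [monomial_mul, one_mul, tsub_add_cancel_of_le hkey]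
      have h7 : monomial (U - (r + 1) • E) (1 : K) ∈ I ^ (s - 1) :=
        hfinal ▸ Ideal.mul_mem_left _ _ hSmem
      exact Ideal.pow_le_pow_right (by omega) h7

end Golod

open MvPolynomial Finsupp in
/-- If `I` is a strongly d-Golod monomial ideal of `K[x_1,…,x_n]`, then its integral
closure `Ī` is strongly d-Golod. -/
theorem stronglyDGolod_integralClosure {K : Type*} [Field K] {n : ℕ}
    (I : Ideal (MvPolynomial (Fin n) K))
    (hI : IsMonomialIdeal I) (hIG : StronglyDGolod I) :
    StronglyDGolod (monomialIntegralClosure I) := by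
  intro a b ha hb i j hai hbj
  by_cases hIT : (1 : MvPolynomial (Fin n) K) ∈ I
  · have hItop : I = ⊤ := (Ideal.eq_top_iff_one I).mpr hIT
    refine Ideal.subset_span ⟨_, rfl, 1, le_refl 1, ?_⟩
    rw [pow_one, pow_one, hItop]
    trivial
  obtain ⟨a₀, ha₀le, p, hp1, hpa⟩ := mem_monIC_elim ha
  obtain ⟨b₀, hb₀le, q, hq1, hqb⟩ := mem_monIC_elim hb
  have ha₀ne : ∃ l, a₀ l ≠ 0 := by
    by_contra h
    push_neg at h
    have hz : a₀ = 0 := Finsupp.ext h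
    rw [hz] at hpa
    have h1 : (1 : MvPolynomial (Fin n) K) ∈ I ^ p := by simpa using hpa
    exact hIT (Ideal.pow_le_self (by omega) h1)
  have hb₀ne : ∃ l, b₀ l ≠ 0 := by
    by_contra h
    push_neg at h
    have hz : b₀ = 0 := Finsupp.ext h
    rw [hz] at hqb
    have h1 : (1 : MvPolynomial (Fin n) K) ∈ I ^ q := by simpa using hqb
    exact hIT (Ideal.pow_le_self (by omega) h1)
  obtain ⟨la, hla⟩ := ha₀ne
  obtain ⟨lb, hlb⟩ := hb₀ne
  obtain ⟨i', hi'ne, hi'cases⟩ : ∃ i', a₀ i' ≠ 0 ∧ (i' = i ∨ a₀ i = 0) := by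
    by_cases h : a₀ i = 0
    · exact ⟨la, hla, Or.inr h⟩
    · exact ⟨i, h, Or.inl rfl⟩
  obtain ⟨j', hj'ne, hj'cases⟩ : ∃ j', b₀ j' ≠ 0 ∧ (j' = j ∨ b₀ j = 0) := by
    by_cases h : b₀ j = 0
    · exact ⟨lb, hlb, Or.inr h⟩
    · exact ⟨j, h, Or.inl rfl⟩
  set k := p * q with hk
  have hk1 : 1 ≤ k := by
    have := Nat.mul_le_mul hp1 hq1
    simpa [hk] using this
  have hka : monomial (k • a₀) (1 : K) ∈ I ^ k := by
    have h1 : ((monomial a₀ (1 : K)) ^ p) ^ q ∈ (I ^ p) ^ q := Ideal.pow_mem_pow hpa q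
    rw [← pow_mul, ← pow_mul, ← hk] at h1
    rwa [monomial_pow, one_pow] at h1
  have hkb : monomial (k • b₀) (1 : K) ∈ I ^ k := by
    have h1 : ((monomial b₀ (1 : K)) ^ q) ^ p ∈ (I ^ q) ^ p := Ideal.pow_mem_pow hqb p
    rw [← pow_mul, ← pow_mul, mul_comm q p, ← hk] at h1
    rwa [monomial_pow, one_pow] at h1
  have hU : monomial (k • a₀ + k • b₀) (1 : K) ∈ I ^ (k + k) := by
    have h1 := Ideal.mul_mem_mul hka hkb
    rw [← pow_add] at h1
    rwa [monomial_mul, one_mul] at h1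
  have hsia : Finsupp.single i' 1 ≤ a₀ := Finsupp.single_le_iff.mpr (by omega)
  have hsjb : Finsupp.single j' 1 ≤ b₀ := Finsupp.single_le_iff.mpr (by omega)
  have hE'ab : Finsupp.single i' 1 + Finsupp.single j' 1 ≤ a₀ + b₀ := add_le_add hsia hsjb
  have hkE' : k • (Finsupp.single i' 1 + Finsupp.single j' 1) ≤ k • a₀ + k • b₀ := by
    rw [← smul_add]
    intro m
    rw [Finsupp.smul_apply, Finsupp.smul_apply, smul_eq_mul, smul_eq_mul]
    exact Nat.mul_le_mul_left k (hE'ab m)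
  have hgp := golod_pow hI hIG i' j' k (k + k) (k • a₀ + k • b₀) hU hkE'
  have hkk : k + k - k = k := by omega
  rw [hkk] at hgp
  set c₀ := a₀ + b₀ - Finsupp.single i' 1 - Finsupp.single j' 1 with hc₀
  have hc₀E : c₀ = a₀ + b₀ - (Finsupp.single i' 1 + Finsupp.single j' 1) := by
    rw [hc₀, tsub_tsub]
  have hkc₀ : k • c₀ = k • a₀ + k • b₀ - k • (Finsupp.single i' 1 + Finsupp.single j' 1) := by
    have h1 : k • c₀ + k • (Finsupp.single i' 1 + Finsupp.single j' 1) = k • a₀ + k • b₀ := by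
      rw [hc₀E, ← smul_add, ← smul_add, tsub_add_cancel_of_le hE'ab]
    have h2 : (k • a₀ + k • b₀ - k • (Finsupp.single i' 1 + Finsupp.single j' 1))
        + k • (Finsupp.single i' 1 + Finsupp.single j' 1) = k • a₀ + k • b₀ :=
      tsub_add_cancel_of_le hkE'
    exact add_right_cancel (h1.trans h2.symm)
  have hc₀mem : (monomial c₀ (1 : K)) ^ k ∈ I ^ k := by
    rw [monomial_pow, one_pow, hkc₀]
    exact hgp
  have h1 : a₀ - Finsupp.single i' 1 ≤ a - Finsupp.single i 1 := by
    rcases hi'cases with heq | hz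
    · rw [heq]; exact tsub_le_tsub_right ha₀le _
    · refine le_trans tsub_le_self ?_
      intro m
      rw [Finsupp.tsub_apply]
      by_cases hm : m = i
      · subst hm; rw [hz]; exact Nat.zero_le _
      · have hs0 : Finsupp.single i (1 : ℕ) m = 0 :=
          Finsupp.single_eq_of_ne' (fun h => hm h.symm)
        rw [hs0, Nat.sub_zero]
        exact ha₀le m
  have h2 : b₀ - Finsupp.single j' 1 ≤ b - Finsupp.single j 1 := by
    rcases hj'cases with heq | hz
    · rw [heq]; exact tsub_le_tsub_right hb₀le _
    · refine le_trans tsub_le_self ?_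
      intro m
      rw [Finsupp.tsub_apply]
      by_cases hm : m = j
      · subst hm; rw [hz]; exact Nat.zero_le _
      · have hs0 : Finsupp.single j (1 : ℕ) m = 0 :=
          Finsupp.single_eq_of_ne' (fun h => hm h.symm)
        rw [hs0, Nat.sub_zero]
        exact hb₀le m
  have hta : Finsupp.single i (1 : ℕ) ≤ a := Finsupp.single_le_iff.mpr (by omega)
  have htb : Finsupp.single j (1 : ℕ) ≤ b := Finsupp.single_le_iff.mpr (by omega)
  have hc₀le : c₀ ≤ a + b - Finsupp.single i 1 - Finsupp.single j 1 := by
    have e1 : c₀ = (a₀ - Finsupp.single i' 1) + (b₀ - Finsupp.single j' 1) := by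
      rw [hc₀E]
      exact (tsub_add_tsub_comm hsia hsjb).symm
    have e2 : a + b - Finsupp.single i 1 - Finsupp.single j 1
        = (a - Finsupp.single i 1) + (b - Finsupp.single j 1) := by
      rw [tsub_tsub]
      exact (tsub_add_tsub_comm hta htb).symm
    rw [e1, e2]
    exact add_le_add h1 h2
  exact mem_monIC_of_le hc₀le ⟨k, hk1, hc₀mem⟩
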